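/- Good-event estimate for the Feynman–Kac semigroup along the coupled chain: Assume hypothesis (C) with constants q ∈ [0,1), C > 0, and let V : X → ℝ be Lipschitz continuous. Then there exists a constant C_V < ∞, depending only on q, C, ‖V‖_L and the diameter of X, such that for every Lipschitz continuous f : X → ℝ, every n ≥ 1 and all x, x' ∈ X, |E[1_{B_n}·(f(x_n)·exp(V(x_1)+⋯+V(x_n)) − f(x_n')·exp(V(x_1')+⋯+V(x_n')))]| ≤ C_V·‖f‖_L·‖Q_n^V 1‖_∞·d(x,x'), where B_n = ∩_{j=0}^{n−1} A_j with A_j = {ω : d(x_{j+1}(ω), x_{j+1}'(ω)) ≤ q·d(x_j(ω), x_j'(ω))}, and ‖f‖_L = ‖f‖_∞ + Lip(f). -/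
import Mathlib


open MeasureTheory Filter Topology
open scoped ENNReal NNReal

noncomputable def FK {X : Type*} [MeasurableSpace X] (κ : X → Measure X) (V f : X → ℝ) (x : X) : ℝ :=
  ∫ y, Real.exp (V y) * f y ∂(κ x)

noncomputable def FKiter {X : Type*} [MeasurableSpace X] (κ : X → Measure X) (V : X → ℝ) :
    ℕ → (X → ℝ) → X → ℝ
  | 0 => fun f => f
  | n + 1 => fun f => FK κ V (FKiter κ V n f)

noncomputable def supNorm {X : Type*} (f : X → ℝ) : ℝ := ⨆ x, |f x|

noncomputable def lipConst {X : Type*} [MetricSpace X] (f : X → ℝ) : ℝ :=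
  sSup {c | ∃ x y, x ≠ y ∧ c = |f x - f y| / dist x y}

noncomputable def lipNorm {X : Type*} [MetricSpace X] (f : X → ℝ) : ℝ := supNorm f + lipConst f

/-- The coupled chain `(x_k, x_k')` driven by the maps `R, R'` and the noise sequence `ω`. -/
def chain {X Ω₀ : Type*} (R R' : X → X → Ω₀ → X) (x x' : X) : ℕ → (ℕ → Ω₀) → X × X
  | 0 => fun _ => (x, x')
  | k + 1 => fun ω =>
      (R (chain R R' x x' k ω).1 (chain R R' x x' k ω).2 (ω k),
       R' (chain R R' x x' k ω).1 (chain R R' x x' k ω).2 (ω k))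

/-- The squeezing event `A_j` for the coupled chain. -/
def eventA {X Ω₀ : Type*} [MetricSpace X] (R R' : X → X → Ω₀ → X) (x x' : X) (q : ℝ)
    (j : ℕ) : Set (ℕ → Ω₀) :=
  {ω | dist (chain R R' x x' (j + 1) ω).1 (chain R R' x x' (j + 1) ω).2
        ≤ q * dist (chain R R' x x' j ω).1 (chain R R' x x' j ω).2}

/-- The good event `B_k = ∩_{j<k} A_j`. -/
def eventB {X Ω₀ : Type*} [MetricSpace X] (R R' : X → X → Ω₀ → X) (x x' : X) (q : ℝ)
    (k : ℕ) : Set (ℕ → Ω₀) :=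
  ⋂ j ∈ Finset.range k, eventA R R' x x' q j

/-- The bad event `C_k = B_k ∩ A_kᶜ`. -/
def eventC {X Ω₀ : Type*} [MetricSpace X] (R R' : X → X → Ω₀ → X) (x x' : X) (q : ℝ)
    (k : ℕ) : Set (ℕ → Ω₀) :=
  eventB R R' x x' q k ∩ (eventA R R' x x' q k)ᶜ

set_option maxHeartbeats 1000000

section Aux
variable {X Ω₀ : Type*} [MeasurableSpace X] [MeasurableSpace Ω₀]
variable {R R' : X → X → Ω₀ → X}

omit [MeasurableSpace X] [MeasurableSpace Ω₀] in
lemma chain_congr (x x' : X) (k : ℕ) (ω ω' : ℕ → Ω₀)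
    (h : ∀ i < k, ω i = ω' i) : chain R R' x x' k ω = chain R R' x x' k ω' := by
  induction k with
  | zero => rfl
  | succ m ih =>
    have h1 : chain R R' x x' m ω = chain R R' x x' m ω' :=
      ih fun i hi => h i (Nat.lt_succ_of_lt hi)
    simp [chain, h1, h m (Nat.lt_succ_self m)]

omit [MeasurableSpace X] [MeasurableSpace Ω₀] in
lemma chain_shift (x x' : X) (k : ℕ) (ω : ℕ → Ω₀) :
    chain R R' x x' (k + 1) ω
      = chain R R' (R x x' (ω 0)) (R' x x' (ω 0)) k (fun i => ω (i + 1)) := by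
  induction k with
  | zero => simp [chain]
  | succ m ih =>
    show (R (chain R R' x x' (m+1) ω).1 (chain R R' x x' (m+1) ω).2 (ω (m+1)),
          R' (chain R R' x x' (m+1) ω).1 (chain R R' x x' (m+1) ω).2 (ω (m+1))) = _
    rw [ih]
    rfl

lemma chain_measurable
    (hR : Measurable fun p : (X × X) × Ω₀ => R p.1.1 p.1.2 p.2)
    (hR' : Measurable fun p : (X × X) × Ω₀ => R' p.1.1 p.1.2 p.2) (k : ℕ) :
    Measurable fun p : (X × X) × (ℕ → Ω₀) => chain R R' p.1.1 p.1.2 k p.2 := by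
  induction k with
  | zero => exact measurable_fst
  | succ m ih =>
    have hm : Measurable fun p : (X × X) × (ℕ → Ω₀) =>
        ((chain R R' p.1.1 p.1.2 m p.2), p.2 m) :=
      ih.prodMk ((measurable_pi_apply m).comp measurable_snd)
    exact (hR.comp hm).prodMk (hR'.comp hm)

end Aux

section Peel
variable {Ω₀ : Type*} [MeasurableSpace Ω₀] (P₀ : Measure Ω₀) [IsProbabilityMeasure P₀]
variable (P : Measure (ℕ → Ω₀)) [IsProbabilityMeasure P]
variable (hP : ∀ n : ℕ, Measure.map (fun ω (i : Fin n) => ω i) P = Measure.pi fun _ : Fin n => P₀)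

include hP in
lemma restrict_int (m : ℕ) (G : (Fin m → Ω₀) → ℝ) (hG : Measurable G) :
    ∫ ω, G (fun i : Fin m => ω i) ∂P = ∫ v, G v ∂(Measure.pi fun _ : Fin m => P₀) := by
  rw [← hP m]
  exact (integral_map ((measurable_pi_lambda _ fun i => measurable_pi_apply _).aemeasurable)
    hG.aestronglyMeasurable).symm

include hP in
lemma peel (m : ℕ) (G : Ω₀ → (Fin m → Ω₀) → ℝ)
    (hG : Measurable fun p : Ω₀ × (Fin m → Ω₀) => G p.1 p.2)
    (M : ℝ) (hb : ∀ a v, |G a v| ≤ M) :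
    ∫ ω, G (ω 0) (fun i : Fin m => ω (i + 1)) ∂P
      = ∫ a, ∫ v, G a v ∂(Measure.pi fun _ : Fin m => P₀) ∂P₀ := by
  set e := MeasurableEquiv.piFinSuccAbove (fun _ : Fin (m + 1) => Ω₀) 0 with he
  have hmp := measurePreserving_piFinSuccAbove (fun _ : Fin (m + 1) => P₀) 0
  have hpair : Measurable fun v : Fin (m + 1) → Ω₀ =>
      ((v 0, fun i : Fin m => v i.succ) : Ω₀ × (Fin m → Ω₀)) :=
    (measurable_pi_apply 0).prodMk (measurable_pi_iff.2 fun i => measurable_pi_apply i.succ)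
  have hGe : Measurable fun v : Fin (m + 1) → Ω₀ => G (v 0) (fun i : Fin m => v i.succ) :=
    hG.comp hpair
  have h1 : ∫ ω, G (ω 0) (fun i : Fin m => ω (i + 1)) ∂P
      = ∫ v, G (v 0) (fun i : Fin m => v i.succ) ∂(Measure.pi fun _ : Fin (m + 1) => P₀) := by
    have := restrict_int P₀ P hP (m + 1) (fun v => G (v 0) (fun i : Fin m => v i.succ)) hGe
    rw [← this]
    rfl
  rw [h1]
  have h2 : ∫ v, G (v 0) (fun i : Fin m => v i.succ) ∂(Measure.pi fun _ : Fin (m + 1) => P₀)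
      = ∫ p : Ω₀ × (Fin m → Ω₀), G p.1 p.2 ∂(P₀.prod (Measure.pi fun _ : Fin m => P₀)) := by
    rw [← hmp.map_eq, integral_map e.measurable.aemeasurable hG.aestronglyMeasurable]
    refine integral_congr_ae (Filter.Eventually.of_forall fun v => ?_)
    simp [he, MeasurableEquiv.piFinSuccAbove, Fin.zero_succAbove]
    rfl
  rw [h2]
  have hint : Integrable (fun p : Ω₀ × (Fin m → Ω₀) => G p.1 p.2)
      (P₀.prod (Measure.pi fun _ : Fin m => P₀)) := by
    refine (integrable_const M).mono' hG.aestronglyMeasurable ?_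
    exact Filter.Eventually.of_forall fun p => by simpa using hb p.1 p.2
  exact integral_prod _ hint

end Peel

section Main
variable {X : Type*} [MetricSpace X] [CompactSpace X] [MeasurableSpace X] [BorelSpace X]
variable {Ω₀ : Type*} [MeasurableSpace Ω₀]

/-- padding a finite noise vector to an infinite one -/
noncomputable def pad [h : Nonempty Ω₀] (m : ℕ) (v : Fin m → Ω₀) : ℕ → Ω₀ :=
  fun i => if h : i < m then v ⟨i, h⟩ else Classical.arbitrary Ω₀

lemma pad_measurable [h : Nonempty Ω₀] (m : ℕ) : Measurable (pad (Ω₀ := Ω₀) m) := by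
  refine measurable_pi_lambda _ fun i => ?_
  unfold pad
  split_ifs with hi
  · exact measurable_pi_apply _
  · exact measurable_const

lemma FKiter_cont (κ : X → Measure X)
    (hFeller : ∀ f : X → ℝ, Continuous f → Continuous fun x => ∫ y, f y ∂(κ x))
    (V : X → ℝ) (hV : Continuous V) (n : ℕ) : Continuous (FKiter κ V n 1) := by
  induction n with
  | zero => exact continuous_const
  | succ m ih =>
    exact hFeller _ ((Real.continuous_exp.comp hV).mul ih)

lemma exp_sum_chain_integral (κ : X → Measure X)
    (hκprob : ∀ x, IsProbabilityMeasure (κ x))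
    (hFeller : ∀ f : X → ℝ, Continuous f → Continuous fun x => ∫ y, f y ∂(κ x))
    (P₀ : Measure Ω₀) [IsProbabilityMeasure P₀]
    (R R' : X → X → Ω₀ → X)
    (hRmeas : Measurable fun p : (X × X) × Ω₀ => R p.1.1 p.1.2 p.2)
    (hR'meas : Measurable fun p : (X × X) × Ω₀ => R' p.1.1 p.1.2 p.2)
    (hRlaw : ∀ x x' : X, Measure.map (R x x') P₀ = κ x)
    (P : Measure (ℕ → Ω₀)) [IsProbabilityMeasure P]
    (hP : ∀ n : ℕ, Measure.map (fun ω (i : Fin n) => ω i) P = Measure.pi fun _ : Fin n => P₀)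
    (V : X → ℝ) (hV : Continuous V) (MV : ℝ) (hMV : ∀ y, |V y| ≤ MV) :
    ∀ (n : ℕ) (x x' : X),
      ∫ ω, Real.exp (∑ j ∈ Finset.range n, V (chain R R' x x' (j + 1) ω).1) ∂P
        = FKiter κ V n 1 x := by
  have hΩ : Nonempty Ω₀ := by
    by_contra h
    rw [not_nonempty_iff] at h
    have h1 : P₀ Set.univ = 1 := measure_univ
    rw [Set.eq_empty_of_isEmpty (Set.univ : Set Ω₀)] at h1
    simp at h1
  -- joint measurability of chain for fixed start
  have hchain : ∀ (y y' : X) (k : ℕ),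
      Measurable fun ω : ℕ → Ω₀ => chain R R' y y' k ω := by
    intro y y' k
    exact (chain_measurable hRmeas hR'meas k).comp
      ((measurable_const : Measurable fun _ : ℕ → Ω₀ => ((y, y') : X × X)).prodMk
        measurable_id)
  intro n
  induction n with
  | zero =>
    intro x x'
    simp [FKiter]
  | succ m ih =>
    intro x x'
    -- the integrand in peeled form
    set G : Ω₀ → (Fin m → Ω₀) → ℝ := fun a v =>
      Real.exp (V (R x x' a)) *
        Real.exp (∑ j ∈ Finset.range m,
          V (chain R R' (R x x' a) (R' x x' a) (j + 1) (pad m v)).1) with hGdef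
    have hRa : Measurable fun a : Ω₀ => R x x' a := by
      have : Measurable fun a : Ω₀ => (((x, x'), a) : (X × X) × Ω₀) :=
        measurable_const.prodMk measurable_id
      exact hRmeas.comp this
    have hR'a : Measurable fun a : Ω₀ => R' x x' a := by
      have : Measurable fun a : Ω₀ => (((x, x'), a) : (X × X) × Ω₀) :=
        measurable_const.prodMk measurable_id
      exact hR'meas.comp this
    have hGmeas : Measurable fun p : Ω₀ × (Fin m → Ω₀) => G p.1 p.2 := by
      have hbase : Measurable fun p : Ω₀ × (Fin m → Ω₀) =>
          (((R x x' p.1, R' x x' p.1), pad m p.2) : (X × X) × (ℕ → Ω₀)) :=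
        ((hRa.comp measurable_fst).prodMk (hR'a.comp measurable_fst)).prodMk
          ((pad_measurable m).comp measurable_snd)
      have hsum : Measurable fun p : Ω₀ × (Fin m → Ω₀) =>
          ∑ j ∈ Finset.range m,
            V (chain R R' (R x x' p.1) (R' x x' p.1) (j + 1) (pad m p.2)).1 := by
        refine Finset.measurable_sum _ fun j _ => ?_
        exact hV.measurable.comp
          (measurable_fst.comp ((chain_measurable hRmeas hR'meas (j + 1)).comp hbase))
      exact ((Real.measurable_exp.comp (hV.measurable.comp (hRa.comp measurable_fst))).mul
        (Real.measurable_exp.comp hsum))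
    have hGbound : ∀ a v, |G a v| ≤ Real.exp MV * Real.exp (m * MV) := by
      intro a v
      simp only [hGdef]
      rw [abs_of_pos (by positivity)]
      have h1 : V (R x x' a) ≤ MV := le_trans (le_abs_self _) (hMV _)
      have h2 : (∑ j ∈ Finset.range m,
          V (chain R R' (R x x' a) (R' x x' a) (j + 1) (pad m v)).1) ≤ m * MV := by
        calc _ ≤ ∑ _j ∈ Finset.range m, MV :=
              Finset.sum_le_sum fun j _ => le_trans (le_abs_self _) (hMV _)
          _ = m * MV := by simp [mul_comm]
      exact mul_le_mul (Real.exp_le_exp.2 h1) (Real.exp_le_exp.2 h2)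
        (Real.exp_pos _).le (Real.exp_pos _).le
    -- pointwise identification
    have hpoint : ∀ ω : ℕ → Ω₀,
        Real.exp (∑ j ∈ Finset.range (m + 1), V (chain R R' x x' (j + 1) ω).1)
          = G (ω 0) (fun i : Fin m => ω (i + 1)) := by
      intro ω
      simp only [hGdef]
      rw [← Real.exp_add]
      congr 1
      rw [Finset.sum_range_succ']
      rw [add_comm]
      refine congrArg₂ (· + ·) rfl ?_
      refine Finset.sum_congr rfl fun j _hj => ?_
      rw [chain_shift]
      refine congrArg V (congrArg Prod.fst (chain_congr _ _ (j + 1) _ _ fun i hi => ?_))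
      have hil : i < m := by
        have hjm : j < m := Finset.mem_range.1 _hj
        omega
      simp [pad, hil]
    rw [integral_congr_ae (Filter.Eventually.of_forall hpoint)]
    rw [peel P₀ P hP m G hGmeas _ hGbound]
    -- inner integral equals FKiter m 1 (R x x' a)
    have hinner : ∀ a : Ω₀,
        ∫ v, G a v ∂(Measure.pi fun _ : Fin m => P₀)
          = Real.exp (V (R x x' a)) * FKiter κ V m 1 (R x x' a) := by
      intro a
      simp only [hGdef]
      rw [integral_const_mul]
      congr 1
      set y := R x x' a
      set y' := R' x x' a
      have hG' : Measurable fun v : Fin m → Ω₀ =>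
          Real.exp (∑ j ∈ Finset.range m, V (chain R R' y y' (j + 1) (pad m v)).1) := by
        refine Real.measurable_exp.comp (Finset.measurable_sum _ fun j _ => ?_)
        exact hV.measurable.comp (measurable_fst.comp
          ((hchain y y' (j + 1)).comp (pad_measurable m)))
      rw [← restrict_int P₀ P hP m _ hG']
      rw [← ih y y']
      refine integral_congr_ae (Filter.Eventually.of_forall fun ω => ?_)
      refine congrArg Real.exp (Finset.sum_congr rfl fun j hj => ?_)
      refine congrArg V (congrArg Prod.fst (chain_congr _ _ (j + 1) _ _ fun i hi => ?_))
      have hil : i < m := by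
        have : j < m := Finset.mem_range.1 hj
        omega
      simp [pad, hil]
    rw [integral_congr_ae (Filter.Eventually.of_forall hinner)]
    -- change variables via hRlaw
    have hcont : Continuous fun z => Real.exp (V z) * FKiter κ V m 1 z :=
      (Real.continuous_exp.comp hV).mul (FKiter_cont κ hFeller V hV m)
    have : ∫ a, Real.exp (V (R x x' a)) * FKiter κ V m 1 (R x x' a) ∂P₀
        = ∫ z, Real.exp (V z) * FKiter κ V m 1 z ∂(κ x) := by
      rw [← hRlaw x x']
      exact (integral_map hRa.aemeasurable hcont.aestronglyMeasurable).symm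
    rw [this]
    rfl

end Main

section Helpers

lemma sum_Icc_one_eq_range (g : ℕ → ℝ) (n : ℕ) :
    ∑ i ∈ Finset.Icc 1 n, g i = ∑ j ∈ Finset.range n, g (j + 1) := by
  induction n with
  | zero => simp
  | succ m ih => rw [Finset.sum_Icc_succ_top (by omega), ih, Finset.sum_range_succ]

lemma abs_exp_sub_one_le (t : ℝ) : |Real.exp t - 1| ≤ Real.exp |t| - 1 := by
  rcases le_or_gt 0 t with h | h
  · rw [abs_of_nonneg h]
    rw [abs_of_nonneg (by nlinarith [Real.one_le_exp h] : (0:ℝ) ≤ Real.exp t - 1)]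
  · rw [abs_of_neg h]
    have h1 : Real.exp (t/2) * Real.exp (t/2) = Real.exp t := by
      rw [← Real.exp_add]; ring_nf
    have h2 : Real.exp (-t/2) * Real.exp (-t/2) = Real.exp (-t) := by
      rw [← Real.exp_add]; ring_nf
    have h3 : Real.exp (t/2) * Real.exp (-t/2) = 1 := by
      rw [← Real.exp_add]; ring_nf; exact Real.exp_zero
    have h4 : Real.exp t < 1 := by
      rw [← Real.exp_zero]; exact Real.exp_lt_exp.2 h
    rw [abs_of_nonpos (by linarith : Real.exp t - 1 ≤ 0)]
    nlinarith [sq_nonneg (Real.exp (t/2) - Real.exp (-t/2))]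

lemma exp_sub_one_le_mul (t : ℝ) : Real.exp t - 1 ≤ t * Real.exp t := by
  have h := Real.add_one_le_exp (-t)
  have hprod : Real.exp t * Real.exp (-t) = 1 := by rw [← Real.exp_add]; simp
  nlinarith [Real.exp_pos t, mul_le_mul_of_nonneg_left h (Real.exp_pos t).le]

lemma abs_le_supNorm {X : Type*} [TopologicalSpace X] [CompactSpace X]
    (f : X → ℝ) (hf : Continuous f) (x : X) : |f x| ≤ supNorm f :=
  le_ciSup (IsCompact.bddAbove (isCompact_range hf.abs)) x

lemma lipConst_nonneg {X : Type*} [MetricSpace X] (f : X → ℝ) : 0 ≤ lipConst f := by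
  refine Real.sSup_nonneg ?_
  rintro c ⟨u, v, huv, rfl⟩
  positivity

lemma abs_sub_le_lipConst {X : Type*} [MetricSpace X] (f : X → ℝ) (Kf : ℝ≥0)
    (hf : LipschitzWith Kf f) (a b : X) : |f a - f b| ≤ lipConst f * dist a b := by
  rcases eq_or_ne a b with rfl | hab
  · simp
  · have hbdd : BddAbove {c | ∃ x y, x ≠ y ∧ c = |f x - f y| / dist x y} := by
      refine ⟨Kf, ?_⟩
      rintro c ⟨u, v, huv, rfl⟩
      rw [div_le_iff₀ (dist_pos.2 huv)]
      have := hf.dist_le_mul u v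
      rwa [Real.dist_eq] at this
    have h1 : |f a - f b| / dist a b ≤ lipConst f :=
      le_csSup hbdd ⟨a, b, hab, rfl⟩
    have hd : (0:ℝ) < dist a b := dist_pos.2 hab
    calc |f a - f b| = |f a - f b| / dist a b * dist a b := by field_simp
      _ ≤ lipConst f * dist a b := mul_le_mul_of_nonneg_right h1 dist_nonneg

end Helpers

lemma abs_sub_le'' (a b : ℝ) : |a - b| ≤ |a| + |b| := by
  calc |a - b| = |a + -b| := by ring_nf
    _ ≤ |a| + |-b| := abs_add_le _ _
    _ = |a| + |b| := by rw [abs_neg]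

/-- Good-event estimate for the Feynman–Kac semigroup along the coupled
chain: there is `C_V < ∞` such that
`|E[1_{B_n}·(f(x_n)e^{ΣV(x_i)} − f(x_n')e^{ΣV(x_i')})]| ≤ C_V·‖f‖_L·‖Q_n^V 1‖_∞·d(x,x')`. -/
theorem good_event_FK_estimate
    {X : Type*} [MetricSpace X] [CompactSpace X] [MeasurableSpace X] [BorelSpace X]
    (κ : X → Measure X) (hκmeas : Measurable κ)
    (hκprob : ∀ x, IsProbabilityMeasure (κ x))
    (hFeller : ∀ f : X → ℝ, Continuous f → Continuous fun x => ∫ y, f y ∂(κ x))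
    {Ω₀ : Type*} [MeasurableSpace Ω₀] (P₀ : Measure Ω₀) [IsProbabilityMeasure P₀]
    (q : ℝ) (hq0 : 0 ≤ q) (hq1 : q < 1) (C : ℝ) (hC : 0 < C)
    (R R' : X → X → Ω₀ → X)
    (hRmeas : Measurable fun p : (X × X) × Ω₀ => R p.1.1 p.1.2 p.2)
    (hR'meas : Measurable fun p : (X × X) × Ω₀ => R' p.1.1 p.1.2 p.2)
    (hRlaw : ∀ x x' : X, Measure.map (R x x') P₀ = κ x)
    (hR'law : ∀ x x' : X, Measure.map (R' x x') P₀ = κ x')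
    (hcouple : ∀ x x' : X,
      P₀ {ω | q * dist x x' < dist (R x x' ω) (R' x x' ω)} ≤ ENNReal.ofReal (C * dist x x'))
    -- `P` is the countable product measure `P₀^{⊗ℕ}` on `Ω = Ω₀^ℕ`
    (P : Measure (ℕ → Ω₀)) [IsProbabilityMeasure P]
    (hP : ∀ n : ℕ, Measure.map (fun ω (i : Fin n) => ω i) P = Measure.pi fun _ : Fin n => P₀)
    (V : X → ℝ) (KV : ℝ≥0) (hV : LipschitzWith KV V) :
    ∃ CV : ℝ, ∀ (f : X → ℝ) (Kf : ℝ≥0), LipschitzWith Kf f →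
      ∀ (n : ℕ), 1 ≤ n → ∀ (x x' : X),
        |∫ ω in eventB R R' x x' q n,
            (f (chain R R' x x' n ω).1
                * Real.exp (∑ i ∈ Finset.Icc 1 n, V (chain R R' x x' i ω).1)
              - f (chain R R' x x' n ω).2
                * Real.exp (∑ i ∈ Finset.Icc 1 n, V (chain R R' x x' i ω).2)) ∂P|
          ≤ CV * lipNorm f * supNorm (FKiter κ V n 1) * dist x x' := by
  classical
  have hVcont : Continuous V := hV.continuous
  obtain ⟨MV, hMV⟩ : ∃ M : ℝ, ∀ y, |V y| ≤ M := by
    obtain ⟨M, hM⟩ := (isCompact_range hVcont.abs).bddAbove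
    exact ⟨M, fun y => hM ⟨y, rfl⟩⟩
  set D := Metric.diam (Set.univ : Set X) with hD
  have hq' : (0:ℝ) < 1 - q := by linarith
  set c := (KV : ℝ) / (1 - q) with hc
  have hc0 : 0 ≤ c := div_nonneg KV.coe_nonneg hq'.le
  refine ⟨1 + c * Real.exp (c * D), ?_⟩
  intro f Kf hf n hn x x'
  set CV := 1 + c * Real.exp (c * D) with hCV
  have hCV0 : 0 ≤ CV := by positivity
  have hfcont : Continuous f := hf.continuous
  set d := dist x x' with hdd
  have hd0 : (0:ℝ) ≤ d := dist_nonneg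
  have hdD : d ≤ D := Metric.dist_le_diam_of_mem Metric.isBounded_of_compactSpace
    (Set.mem_univ x) (Set.mem_univ x')
  have hchain : ∀ k : ℕ, Measurable fun ω : ℕ → Ω₀ => chain R R' x x' k ω := fun k =>
    (chain_measurable hRmeas hR'meas k).comp
      ((measurable_const : Measurable fun _ : ℕ → Ω₀ => ((x, x') : X × X)).prodMk measurable_id)
  set S : (ℕ → Ω₀) → ℝ := fun ω => ∑ i ∈ Finset.Icc 1 n, V (chain R R' x x' i ω).1 with hSdef
  set S' : (ℕ → Ω₀) → ℝ := fun ω => ∑ i ∈ Finset.Icc 1 n, V (chain R R' x x' i ω).2 with hS'def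
  have hSmeas : Measurable S := Finset.measurable_sum _ fun i _ =>
    hVcont.measurable.comp (measurable_fst.comp (hchain i))
  have hS'meas : Measurable S' := Finset.measurable_sum _ fun i _ =>
    hVcont.measurable.comp (measurable_snd.comp (hchain i))
  set g : (ℕ → Ω₀) → ℝ := fun ω =>
    f (chain R R' x x' n ω).1 * Real.exp (S ω)
      - f (chain R R' x x' n ω).2 * Real.exp (S' ω) with hgdef
  have hgmeas : Measurable g := by
    apply Measurable.sub
    · exact (hfcont.measurable.comp (measurable_fst.comp (hchain n))).mul
        (Real.measurable_exp.comp hSmeas)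
    · exact (hfcont.measurable.comp (measurable_snd.comp (hchain n))).mul
        (Real.measurable_exp.comp hS'meas)
  have hsupf0 : 0 ≤ supNorm f := (abs_nonneg _).trans (abs_le_supNorm f hfcont x)
  have hlipN0 : 0 ≤ lipNorm f := add_nonneg hsupf0 (lipConst_nonneg f)
  have hSle : ∀ ω, S ω ≤ n * MV := by
    intro ω
    calc S ω ≤ ∑ _i ∈ Finset.Icc 1 n, MV :=
          Finset.sum_le_sum fun i _ => (le_abs_self _).trans (hMV _)
      _ = n * MV := by rw [Finset.sum_const, Nat.card_Icc]; simp
  have hS'le : ∀ ω, S' ω ≤ n * MV := by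
    intro ω
    calc S' ω ≤ ∑ _i ∈ Finset.Icc 1 n, MV :=
          Finset.sum_le_sum fun i _ => (le_abs_self _).trans (hMV _)
      _ = n * MV := by rw [Finset.sum_const, Nat.card_Icc]; simp
  have hexpS_int : Integrable (fun ω => Real.exp (S ω)) P := by
    refine (integrable_const (Real.exp (n * MV))).mono'
      (Real.measurable_exp.comp hSmeas).aestronglyMeasurable
      (Filter.Eventually.of_forall fun ω => ?_)
    rw [Real.norm_eq_abs, abs_of_pos (Real.exp_pos _)]
    exact Real.exp_le_exp.2 (hSle ω)
  have hgint : Integrable g P := by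
    refine (integrable_const (2 * (supNorm f * Real.exp (n * MV)))).mono'
      hgmeas.aestronglyMeasurable (Filter.Eventually.of_forall fun ω => ?_)
    rw [Real.norm_eq_abs]
    have e1 : |f (chain R R' x x' n ω).1 * Real.exp (S ω)| ≤ supNorm f * Real.exp (n * MV) := by
      rw [abs_mul, abs_of_pos (Real.exp_pos _)]
      exact mul_le_mul (abs_le_supNorm f hfcont _) (Real.exp_le_exp.2 (hSle ω))
        (Real.exp_pos _).le hsupf0
    have e2 : |f (chain R R' x x' n ω).2 * Real.exp (S' ω)| ≤ supNorm f * Real.exp (n * MV) := by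
      rw [abs_mul, abs_of_pos (Real.exp_pos _)]
      exact mul_le_mul (abs_le_supNorm f hfcont _) (Real.exp_le_exp.2 (hS'le ω))
        (Real.exp_pos _).le hsupf0
    calc |g ω| ≤ |f (chain R R' x x' n ω).1 * Real.exp (S ω)|
          + |f (chain R R' x x' n ω).2 * Real.exp (S' ω)| := abs_sub_le'' _ _
      _ ≤ 2 * (supNorm f * Real.exp (n * MV)) := by linarith
  have hBmeas : MeasurableSet (eventB R R' x x' q n) := by
    refine MeasurableSet.biInter (Set.Finite.countable (Finset.finite_toSet _)) fun j _ => ?_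
    exact measurableSet_le ((Measurable.fst (hchain (j+1))).dist (Measurable.snd (hchain (j+1))))
      (measurable_const.mul ((Measurable.fst (hchain j)).dist (Measurable.snd (hchain j))))
  -- contraction along the good event
  have hB : ∀ ω ∈ eventB R R' x x' q n, ∀ k, k ≤ n →
      dist (chain R R' x x' k ω).1 (chain R R' x x' k ω).2 ≤ q ^ k * d := by
    intro ω hω k
    induction k with
    | zero =>
      intro _
      show dist x x' ≤ q ^ 0 * d
      simp [hdd]
    | succ k ih =>
      intro hk
      have hA : ω ∈ eventA R R' x x' q k := by
        have h := Set.mem_iInter₂.1 hω k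
        exact h (Finset.mem_range.2 (by omega))
      have h1 := ih (by omega)
      calc dist (chain R R' x x' (k+1) ω).1 (chain R R' x x' (k+1) ω).2
          ≤ q * dist (chain R R' x x' k ω).1 (chain R R' x x' k ω).2 := hA
        _ ≤ q * (q ^ k * d) := mul_le_mul_of_nonneg_left h1 hq0
        _ = q ^ (k+1) * d := by ring
  have hgeo : ∑ i ∈ Finset.Icc 1 n, q ^ i ≤ 1 / (1 - q) := by
    have hsub : Finset.Icc 1 n ⊆ Finset.range (n+1) := by
      intro i hi
      simp only [Finset.mem_Icc] at hi
      simp only [Finset.mem_range]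
      omega
    have h1 : ∑ i ∈ Finset.Icc 1 n, q ^ i ≤ ∑ i ∈ Finset.range (n+1), q ^ i :=
      Finset.sum_le_sum_of_subset_of_nonneg hsub fun i _ _ => pow_nonneg hq0 i
    have h2 : ∑ i ∈ Finset.range (n+1), q ^ i = (1 - q^(n+1)) / (1-q) := by
      rw [geom_sum_eq (by linarith : q ≠ 1)]
      rw [show q^(n+1) - 1 = -(1 - q^(n+1)) by ring, show q - 1 = -(1-q) by ring, neg_div_neg_eq]
    rw [h2] at h1
    refine h1.trans ?_
    rw [div_le_div_iff₀ hq' hq']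
    nlinarith [pow_nonneg hq0 (n+1)]
  have hSS' : ∀ ω ∈ eventB R R' x x' q n, |S' ω - S ω| ≤ c * d := by
    intro ω hω
    have habs : |S' ω - S ω| ≤ ∑ i ∈ Finset.Icc 1 n, (KV:ℝ) * (q ^ i * d) := by
      have hdiff : S' ω - S ω = ∑ i ∈ Finset.Icc 1 n,
          (V (chain R R' x x' i ω).2 - V (chain R R' x x' i ω).1) := by
        simp only [hSdef, hS'def]
        rw [Finset.sum_sub_distrib]
      rw [hdiff]
      refine (Finset.abs_sum_le_sum_abs _ _).trans (Finset.sum_le_sum fun i hi => ?_)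
      have h1 : |V (chain R R' x x' i ω).2 - V (chain R R' x x' i ω).1|
          ≤ (KV:ℝ) * dist (chain R R' x x' i ω).2 (chain R R' x x' i ω).1 := by
        have := hV.dist_le_mul (chain R R' x x' i ω).2 (chain R R' x x' i ω).1
        rwa [Real.dist_eq] at this
      refine h1.trans ?_
      rw [dist_comm]
      exact mul_le_mul_of_nonneg_left (hB ω hω i (Finset.mem_Icc.1 hi).2) KV.coe_nonneg
    refine habs.trans ?_
    have heq : ∑ i ∈ Finset.Icc 1 n, (KV:ℝ) * (q ^ i * d)
        = (KV:ℝ) * d * ∑ i ∈ Finset.Icc 1 n, q ^ i := by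
      rw [Finset.mul_sum]
      exact Finset.sum_congr rfl fun i _ => by ring
    rw [heq]
    have h3 : (KV:ℝ) * d * ∑ i ∈ Finset.Icc 1 n, q ^ i ≤ (KV:ℝ) * d * (1/(1-q)) :=
      mul_le_mul_of_nonneg_left hgeo (by positivity)
    refine h3.trans (le_of_eq ?_)
    rw [hc]
    ring
  -- pointwise estimate on the good event
  have hpt : ∀ ω ∈ eventB R R' x x' q n,
      |g ω| ≤ CV * lipNorm f * d * Real.exp (S ω) := by
    intro ω hω
    have hab : dist (chain R R' x x' n ω).1 (chain R R' x x' n ω).2 ≤ q ^ n * d :=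
      hB ω hω n le_rfl
    have habd : dist (chain R R' x x' n ω).1 (chain R R' x x' n ω).2 ≤ d := by
      refine hab.trans ?_
      exact mul_le_of_le_one_left hd0 (pow_le_one₀ hq0 hq1.le)
    have hss : |S' ω - S ω| ≤ c * d := hSS' ω hω
    have h1 : |f (chain R R' x x' n ω).1 - f (chain R R' x x' n ω).2| ≤ lipConst f * d :=
      (abs_sub_le_lipConst f Kf hf _ _).trans
        (mul_le_mul_of_nonneg_left habd (lipConst_nonneg f))
    have h2 : |f (chain R R' x x' n ω).2| ≤ supNorm f := abs_le_supNorm f hfcont _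
    have h3 : |Real.exp (S ω) - Real.exp (S' ω)|
        ≤ Real.exp (S ω) * (c * d * Real.exp (c * D)) := by
      have e1 : Real.exp (S' ω) = Real.exp (S ω) * Real.exp (S' ω - S ω) := by
        rw [← Real.exp_add]; ring_nf
      have e2 : |Real.exp (S ω) - Real.exp (S' ω)|
          = Real.exp (S ω) * |Real.exp (S' ω - S ω) - 1| := by
        rw [e1, ← mul_one_sub, abs_mul, abs_of_pos (Real.exp_pos _), abs_sub_comm]
      rw [e2]
      refine mul_le_mul_of_nonneg_left ?_ (Real.exp_pos _).le
      calc |Real.exp (S' ω - S ω) - 1| ≤ Real.exp |S' ω - S ω| - 1 := abs_exp_sub_one_le _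
        _ ≤ Real.exp (c * d) - 1 := by
            have := Real.exp_le_exp.2 hss
            linarith
        _ ≤ (c * d) * Real.exp (c * d) := exp_sub_one_le_mul _
        _ ≤ c * d * Real.exp (c * D) := by
            refine mul_le_mul_of_nonneg_left (Real.exp_le_exp.2 ?_) (by positivity)
            exact mul_le_mul_of_nonneg_left hdD hc0
    have hlip_le : lipConst f ≤ lipNorm f := le_add_of_nonneg_left hsupf0
    have hsup_le : supNorm f ≤ lipNorm f := le_add_of_nonneg_right (lipConst_nonneg f)
    have step1 : |g ω| ≤ |f (chain R R' x x' n ω).1 - f (chain R R' x x' n ω).2| * Real.exp (S ω)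
        + |f (chain R R' x x' n ω).2| * |Real.exp (S ω) - Real.exp (S' ω)| := by
      have hrw : g ω = (f (chain R R' x x' n ω).1 - f (chain R R' x x' n ω).2) * Real.exp (S ω)
          + f (chain R R' x x' n ω).2 * (Real.exp (S ω) - Real.exp (S' ω)) := by
        simp only [hgdef]
        ring
      rw [hrw]
      refine (abs_add_le _ _).trans (le_of_eq ?_)
      rw [abs_mul, abs_mul, abs_of_pos (Real.exp_pos _)]
    refine step1.trans ?_
    have t1 : |f (chain R R' x x' n ω).1 - f (chain R R' x x' n ω).2| * Real.exp (S ω)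
        ≤ lipNorm f * d * Real.exp (S ω) := by
      refine mul_le_mul_of_nonneg_right (h1.trans ?_) (Real.exp_pos _).le
      exact mul_le_mul_of_nonneg_right hlip_le hd0
    have t2 : |f (chain R R' x x' n ω).2| * |Real.exp (S ω) - Real.exp (S' ω)|
        ≤ lipNorm f * (Real.exp (S ω) * (c * d * Real.exp (c * D))) :=
      mul_le_mul (h2.trans hsup_le) h3 (abs_nonneg _) hlipN0
    calc |f (chain R R' x x' n ω).1 - f (chain R R' x x' n ω).2| * Real.exp (S ω)
        + |f (chain R R' x x' n ω).2| * |Real.exp (S ω) - Real.exp (S' ω)|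
        ≤ lipNorm f * d * Real.exp (S ω)
          + lipNorm f * (Real.exp (S ω) * (c * d * Real.exp (c * D))) := add_le_add t1 t2
      _ = CV * lipNorm f * d * Real.exp (S ω) := by rw [hCV]; ring
  -- the Feynman–Kac identity
  have hint_eq : ∫ ω, Real.exp (S ω) ∂P = FKiter κ V n 1 x := by
    rw [← exp_sum_chain_integral κ hκprob hFeller P₀ R R' hRmeas hR'meas hRlaw P hP V hVcont
      MV hMV n x x']
    refine integral_congr_ae (Filter.Eventually.of_forall fun ω => ?_)
    simp only [hSdef]
    exact congrArg Real.exp (sum_Icc_one_eq_range (fun i => V (chain R R' x x' i ω).1) n)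
  -- conclusion
  show |∫ ω in eventB R R' x x' q n, g ω ∂P| ≤ CV * lipNorm f * supNorm (FKiter κ V n 1) * d
  calc |∫ ω in eventB R R' x x' q n, g ω ∂P|
      ≤ ∫ ω in eventB R R' x x' q n, |g ω| ∂P := by
        simpa [Real.norm_eq_abs] using
          norm_integral_le_integral_norm (μ := P.restrict (eventB R R' x x' q n)) g
    _ ≤ ∫ ω in eventB R R' x x' q n, CV * lipNorm f * d * Real.exp (S ω) ∂P :=
        setIntegral_mono_on hgint.abs.integrableOn (hexpS_int.const_mul _).integrableOn
          hBmeas hpt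
    _ ≤ ∫ ω, CV * lipNorm f * d * Real.exp (S ω) ∂P := by
        refine setIntegral_le_integral (hexpS_int.const_mul _) ?_
        refine Filter.Eventually.of_forall fun ω => ?_
        have := Real.exp_pos (S ω)
        positivity
    _ = CV * lipNorm f * d * ∫ ω, Real.exp (S ω) ∂P := by rw [integral_const_mul]
    _ = CV * lipNorm f * d * FKiter κ V n 1 x := by rw [hint_eq]
    _ ≤ CV * lipNorm f * d * supNorm (FKiter κ V n 1) := by
        refine mul_le_mul_of_nonneg_left ?_ (by positivity)
        exact (le_abs_self _).trans
          (abs_le_supNorm _ (FKiter_cont κ hFeller V hVcont n) x)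
    _ = CV * lipNorm f * supNorm (FKiter κ V n 1) * d := by ring
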